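/- Let A and S be n×n real matrices with A skew-symmetric and S symmetric positive semidefinite, and let h ≥ 0. Then det(I + h·A·S) ≥ 1; in particular det(I + h·A·S) > 0. -/

import Mathlib

open Matrix

lemma det_one_add_psd {n : ℕ} {P : Matrix (Fin n) (Fin n) ℝ} (hP : P.PosSemidef) :
    1 ≤ (1 + P).det := by
  have hH := hP.1
  have hspec := hH.spectral_theorem
  rw [Unitary.conjStarAlgAut_apply] at hspec
  set U : Matrix (Fin n) (Fin n) ℝ := (hH.eigenvectorUnitary : Matrix (Fin n) (Fin n) ℝ)
  have hU : U * star U = 1 := (Matrix.mem_unitaryGroup_iff).mp hH.eigenvectorUnitary.2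
  have key : 1 + P = U * (1 + diagonal (RCLike.ofReal ∘ hH.eigenvalues)) * star U := by
    rw [Matrix.mul_add, Matrix.add_mul, Matrix.mul_one, hU, ← hspec]
  rw [key, Matrix.det_mul_right_comm, hU, Matrix.one_mul]
  rw [← Matrix.diagonal_one, Matrix.diagonal_add, Matrix.det_diagonal]
  calc (1:ℝ) = ∏ _i : Fin n, 1 := by simp
  _ ≤ _ := Finset.prod_le_prod (fun i _ => zero_le_one) (fun i _ => by
      have := hP.eigenvalues_nonneg i
      simp only [Pi.add_apply, Function.comp_apply, RCLike.ofReal_real_eq_id, id, Pi.one_apply]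
      linarith)

lemma det_one_add_skew {n : ℕ} {K : Matrix (Fin n) (Fin n) ℝ} (hK : K.transpose = -K) :
    1 ≤ (1 + K).det ∧ 0 < (1 + K).det := by
  -- squared determinant bound for any scaled skew matrix
  have sq_bound : ∀ t : ℝ, 1 ≤ ((1 + t • K).det) ^ 2 := by
    intro t
    have h1 : ((1 + t • K).det) ^ 2 = ((1 + t • K) * (1 + t • K)ᵀ).det := by
      rw [Matrix.det_mul, Matrix.det_transpose, sq]
    have hMT : (t • K)ᵀ = -(t • K) := by
      rw [Matrix.transpose_smul, hK, smul_neg]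
    have h2 : (1 + t • K) * (1 + t • K)ᵀ = 1 + (t • K) * (t • K)ᵀ := by
      rw [Matrix.transpose_add, Matrix.transpose_one, hMT]
      noncomm_ring
      simp only [smul_add, neg_smul, one_smul, smul_smul]
      abel
    have hpsd : ((t • K) * (t • K)ᵀ).PosSemidef := by
      have hct : (t • K)ᴴ = (t • K)ᵀ := by
        ext i j; simp [Matrix.conjTranspose_apply]
      have := Matrix.posSemidef_self_mul_conjTranspose (t • K)
      rwa [hct] at this
    rw [h1, h2]
    calc (1:ℝ) ≤ (1 + (t • K) * (t • K)ᵀ).det := det_one_add_psd hpsd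
    _ = _ := rfl
  have fcont : Continuous fun t : ℝ => (1 + t • K).det := by
    exact (Continuous.add continuous_const (continuous_id.smul continuous_const)).matrix_det
  have fne : ∀ t : ℝ, (1 + t • K).det ≠ 0 := by
    intro t h0
    have := sq_bound t
    rw [h0] at this; norm_num at this
  have fpos : 0 < (1 + K).det := by
    by_contra hneg
    push_neg at hneg
    obtain ⟨t, ht, h⟩ := intermediate_value_Icc' (by norm_num : (0:ℝ) ≤ 1)
      (fcont.continuousOn)
      (show (0:ℝ) ∈ Set.Icc ((1 + (1:ℝ) • K).det) ((1 + (0:ℝ) • K).det) by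
        simp [Set.mem_Icc]
        simpa using hneg)
    exact fne t h
  refine ⟨?_, fpos⟩
  have := sq_bound 1
  simp only [one_smul] at this
  nlinarith

theorem det_one_add_smul_skew_mul_psd (n : ℕ) (A S : Matrix (Fin n) (Fin n) ℝ)
    (hA : A.transpose = -A) (hS : S.PosSemidef) (h : ℝ) (hh : 0 ≤ h) :
    1 ≤ (1 + h • (A * S)).det ∧ 0 < (1 + h • (A * S)).det := by
  open scoped MatrixOrder in
  set B := CFC.sqrt S with hBdef
  open scoped MatrixOrder in
  have hBB : B * B = CFC.sqrt S * CFC.sqrt S := rfl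
  open scoped MatrixOrder in
  have hBS : B * B = S := CFC.sqrt_mul_sqrt_self S hS.nonneg
  have hBsymm : Bᵀ = B := by
    open scoped MatrixOrder in
    have : B.IsHermitian := (CFC.sqrt_nonneg S).posSemidef.1
    simpa [Matrix.IsHermitian, Matrix.conjTranspose_eq_transpose_of_trivial] using this
  have key : (1 + h • (A * S)).det = (1 + B * (h • (A * B))).det := by
    rw [← hBS]
    rw [show h • (A * (B * B)) = (h • (A * B)) * B by
      rw [Matrix.smul_mul, Matrix.mul_assoc]]
    rw [Matrix.det_one_add_mul_comm]
  have hskew : (B * (h • (A * B)))ᵀ = -(B * (h • (A * B))) := by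
    rw [Matrix.transpose_mul, Matrix.transpose_smul, Matrix.transpose_mul, hA, hBsymm]
    simp [Matrix.mul_assoc, Matrix.mul_neg, Matrix.neg_mul]
  rw [key]
  exact det_one_add_skew hskew
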